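/- For every integer r ≥ 2 there exists a constant C_r > 0 such that for all δ > 0: |∑_{j ≥ 1} j^{r - 5/2} e^{-δ j} − (2r−5)!! · √(2π) / (2δ)^{r−3/2}| ≤ C_r · (1 + δ^{-(r-5/2)}), where by convention the double factorial x!! = ∏_{0 ≤ j < ⌈x/2⌉}(x − 2j) equals 1 when x ≤ 0. -/

import Mathlib

open MeasureTheory Real Set Filter Topology

namespace Stmt2Aux

noncomputable def ff (a δ : ℝ) (x : ℝ) : ℝ := x ^ a * Real.exp (-δ * x)
noncomputable def gg (a δ : ℝ) (x : ℝ) : ℝ := (|a| * x ^ (a-1) + δ * x ^ a) * Real.exp (-δ * x)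

lemma ff_deriv {a δ x : ℝ} (hx : 0 < x) :
    HasDerivAt (ff a δ) ((a * x ^ (a-1) - δ * x ^ a) * Real.exp (-δ * x)) x := by
  have h1 : HasDerivAt (fun y : ℝ => y ^ a) (a * x ^ (a-1)) x :=
    Real.hasDerivAt_rpow_const (Or.inl hx.ne')
  have h2 : HasDerivAt (fun y : ℝ => Real.exp (-δ * y)) (Real.exp (-δ * x) * (-δ)) x := by
    simpa using (((hasDerivAt_id x).const_mul (-δ)).exp)
  have : HasDerivAt (fun y : ℝ => y ^ a * Real.exp (-δ * y))
      (a * x ^ (a-1) * Real.exp (-δ * x) + x ^ a * (Real.exp (-δ * x) * (-δ))) x := h1.mul h2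
  unfold ff
  convert this using 1
  ring

lemma ff_deriv_bound {a δ x : ℝ} (hδ : 0 < δ) (hx : 0 < x) :
    |(a * x ^ (a-1) - δ * x ^ a) * Real.exp (-δ * x)| ≤ gg a δ x := by
  unfold gg
  rw [abs_mul, abs_of_pos (Real.exp_pos _)]
  apply mul_le_mul_of_nonneg_right _ (Real.exp_pos _).le
  calc |a * x ^ (a-1) - δ * x ^ a| ≤ |a * x ^ (a-1)| + |δ * x ^ a| := abs_sub _ _
    _ = |a| * x ^ (a-1) + δ * x ^ a := by
        rw [abs_mul, abs_mul, abs_of_pos (Real.rpow_pos_of_pos hx _),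
          abs_of_pos hδ, abs_of_pos (Real.rpow_pos_of_pos hx _)]

lemma gg_cont {a δ : ℝ} : ContinuousOn (gg a δ) (Ioi 0) := by
  unfold gg
  apply ContinuousOn.mul _ (Real.continuous_exp.comp (continuous_const.mul continuous_id)).continuousOn
  apply ContinuousOn.add
  · exact continuousOn_const.mul (fun x hx => (Real.continuousAt_rpow_const x _ (Or.inl (ne_of_gt hx))).continuousWithinAt)
  · exact continuousOn_const.mul (fun x hx => (Real.continuousAt_rpow_const x _ (Or.inl (ne_of_gt hx))).continuousWithinAt)

lemma ff_cont {a δ : ℝ} : ContinuousOn (ff a δ) (Ioi 0) := by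
  unfold ff
  exact ContinuousOn.mul (fun x hx => (Real.continuousAt_rpow_const x _ (Or.inl (ne_of_gt hx))).continuousWithinAt)
    (Real.continuous_exp.comp (continuous_const.mul continuous_id)).continuousOn

lemma interval_est {a δ c : ℝ} (hδ : 0 < δ) (hc : 1 ≤ c) :
    |ff a δ c - ∫ x in c..(c+1), ff a δ x| ≤ ∫ x in c..(c+1), gg a δ x := by
  have hsub : Set.uIcc c (c+1) ⊆ Ioi 0 := by
    rw [Set.uIcc_of_le (by linarith)]
    intro x hx; exact lt_of_lt_of_le (by linarith) hx.1
  have hfi : IntervalIntegrable (ff a δ) volume c (c+1) :=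
    (ff_cont.mono hsub).intervalIntegrable
  have hgi : IntervalIntegrable (gg a δ) volume c (c+1) :=
    (gg_cont.mono hsub).intervalIntegrable
  set G := ∫ x in c..(c+1), gg a δ x with hG
  have key : ∀ x ∈ Set.Icc c (c+1), |ff a δ x - ff a δ c| ≤ G := by
    intro x hx
    have hcx : c ≤ x := hx.1
    have hx0 : ∀ y ∈ Set.uIcc c x, 0 < y := by
      intro y hy
      rw [Set.uIcc_of_le hcx] at hy
      linarith [hy.1]
    have hderi : IntervalIntegrable (fun y => (a * y ^ (a-1) - δ * y ^ a) * Real.exp (-δ * y)) volume c x := by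
      apply ContinuousOn.intervalIntegrable
      apply ContinuousOn.mul _ ((Real.continuous_exp.comp (continuous_const.mul continuous_id)).continuousOn)
      apply ContinuousOn.sub
      · exact continuousOn_const.mul (fun y hy => (Real.continuousAt_rpow_const y _ (Or.inl (ne_of_gt (hx0 y hy)))).continuousWithinAt)
      · exact continuousOn_const.mul (fun y hy => (Real.continuousAt_rpow_const y _ (Or.inl (ne_of_gt (hx0 y hy)))).continuousWithinAt)
    have hgi2 : IntervalIntegrable (gg a δ) volume c x :=
      (gg_cont.mono (fun y hy => hx0 y hy)).intervalIntegrable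
    have hftc : ∫ y in c..x, (a * y ^ (a-1) - δ * y ^ a) * Real.exp (-δ * y)
        = ff a δ x - ff a δ c := by
      apply intervalIntegral.integral_eq_sub_of_hasDerivAt _ hderi
      intro y hy; exact ff_deriv (hx0 y hy)
    rw [← hftc]
    calc |∫ y in c..x, (a * y ^ (a-1) - δ * y ^ a) * Real.exp (-δ * y)|
        ≤ ∫ y in c..x, |(a * y ^ (a-1) - δ * y ^ a) * Real.exp (-δ * y)| :=
          intervalIntegral.abs_integral_le_integral_abs hcx
      _ ≤ ∫ y in c..x, gg a δ y := by
          apply intervalIntegral.integral_mono_on hcx hderi.abs hgi2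
          intro y hy
          exact ff_deriv_bound hδ (hx0 y (by rw [Set.uIcc_of_le hcx]; exact hy))
      _ ≤ G := by
          apply intervalIntegral.integral_mono_interval le_rfl hcx hx.2 _ hgi
          filter_upwards [ae_restrict_mem measurableSet_Ioc] with y hy
          have hy0 : 0 < y := lt_of_lt_of_le (by linarith) hy.1.le
          unfold gg; positivity
  have h2 : |(∫ x in c..(c+1), ff a δ x) - ff a δ c| ≤ G := by
    have heq : (∫ x in c..(c+1), ff a δ x) - ff a δ c
        = ∫ x in c..(c+1), (ff a δ x - ff a δ c) := by
      rw [intervalIntegral.integral_sub hfi intervalIntegrable_const,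
        intervalIntegral.integral_const]
      simp
    rw [heq]
    have hb := intervalIntegral.norm_integral_le_of_norm_le_const
      (a := c) (b := c+1) (C := G) (f := fun x => ff a δ x - ff a δ c) ?_
    · rw [Real.norm_eq_abs] at hb
      simpa using hb
    · intro x hx
      rw [Set.uIoc_of_le (by linarith)] at hx
      exact key x ⟨hx.1.le, hx.2⟩
  rw [abs_sub_comm] at h2
  exact h2

lemma summ {a δ : ℝ} (hδ : 0 < δ) :
    Summable (fun j : ℕ => ((j:ℝ)+1) ^ a * Real.exp (-δ * ((j:ℝ)+1))) := by
  have hρ : ‖Real.exp (-δ)‖ < 1 := by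
    rw [Real.norm_eq_abs, abs_of_pos (Real.exp_pos _)]
    exact Real.exp_lt_one_iff.mpr (by linarith)
  have hs : Summable (fun j : ℕ => ((j:ℝ)+1) ^ (⌈a⌉₊ : ℕ) * Real.exp (-δ) ^ (j+1)) := by
    have := (summable_pow_mul_geometric_of_norm_lt_one (⌈a⌉₊) hρ).comp_injective
      (add_left_injective 1)
    simpa [Function.comp_def, Nat.cast_add] using this
  refine hs.of_nonneg_of_le (fun j => ?_) (fun j => ?_)
  · positivity
  · have h1 : (1:ℝ) ≤ (j:ℝ)+1 := le_add_of_nonneg_left j.cast_nonneg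
    have hb : ((j:ℝ)+1) ^ a ≤ ((j:ℝ)+1) ^ (⌈a⌉₊ : ℝ) :=
      Real.rpow_le_rpow_of_exponent_le h1 (Nat.le_ceil a)
    rw [Real.rpow_natCast] at hb
    have he : Real.exp (-δ * ((j:ℝ)+1)) = Real.exp (-δ) ^ (j+1) := by
      rw [← Real.exp_nat_mul]; push_cast; ring_nf
    rw [he]
    exact mul_le_mul_of_nonneg_right hb (by positivity)

lemma sum_est {a δ : ℝ} (hδ : 0 < δ) (hfI : IntegrableOn (ff a δ) (Ioi 1))
    (hgI : IntegrableOn (gg a δ) (Ioi 1)) :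
    |(∑' j : ℕ, ff a δ ((j:ℝ)+1)) - ∫ x in Ioi (1:ℝ), ff a δ x| ≤ ∫ x in Ioi (1:ℝ), gg a δ x := by
  set B := ∫ x in Ioi (1:ℝ), gg a δ x with hB
  have hsum : Summable (fun j : ℕ => ff a δ ((j:ℝ)+1)) := summ hδ
  have hsubI : ∀ k : ℕ, Set.uIcc ((k:ℝ)+1) ((k:ℝ)+1+1) ⊆ Ioi 0 := by
    intro k
    rw [Set.uIcc_of_le (by linarith)]
    intro x hx
    have : (0:ℝ) ≤ (k:ℝ) := k.cast_nonneg
    exact lt_of_lt_of_le (by linarith) hx.1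
  have hfik : ∀ k : ℕ, IntervalIntegrable (ff a δ) volume ((k:ℝ)+1) ((k:ℝ)+1+1) :=
    fun k => (ff_cont.mono (hsubI k)).intervalIntegrable
  have hgik : ∀ k : ℕ, IntervalIntegrable (gg a δ) volume ((k:ℝ)+1) ((k:ℝ)+1+1) :=
    fun k => (gg_cont.mono (hsubI k)).intervalIntegrable
  have hNbound : ∀ N : ℕ,
      |(∑ k ∈ Finset.range N, ff a δ ((k:ℝ)+1)) - ∫ x in (1:ℝ)..((N:ℝ)+1), ff a δ x| ≤ B := by
    intro N
    have hadj : ∑ k ∈ Finset.range N, ∫ x in ((k:ℝ)+1)..((k:ℝ)+1+1), ff a δ x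
        = ∫ x in (1:ℝ)..((N:ℝ)+1), ff a δ x := by
      have := intervalIntegral.sum_integral_adjacent_intervals (a := fun k : ℕ => (k:ℝ)+1)
        (n := N) (f := ff a δ) (μ := volume) (fun k _ => by
          have := hfik k
          convert this using 2 <;> push_cast <;> ring)
      simpa using this
    rw [← hadj, ← Finset.sum_sub_distrib]
    calc |∑ k ∈ Finset.range N, (ff a δ ((k:ℝ)+1) - ∫ x in ((k:ℝ)+1)..((k:ℝ)+1+1), ff a δ x)|
        ≤ ∑ k ∈ Finset.range N, |ff a δ ((k:ℝ)+1) - ∫ x in ((k:ℝ)+1)..((k:ℝ)+1+1), ff a δ x| :=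
          Finset.abs_sum_le_sum_abs _ _
      _ ≤ ∑ k ∈ Finset.range N, ∫ x in ((k:ℝ)+1)..((k:ℝ)+1+1), gg a δ x := by
          apply Finset.sum_le_sum
          intro k _
          exact interval_est hδ (by linarith [k.cast_nonneg (α := ℝ)])
      _ = ∫ x in (1:ℝ)..((N:ℝ)+1), gg a δ x := by
          have := intervalIntegral.sum_integral_adjacent_intervals (a := fun k : ℕ => (k:ℝ)+1)
            (n := N) (f := gg a δ) (μ := volume) (fun k _ => by
              have := hgik k
              convert this using 2 <;> push_cast <;> ring)
          simpa using this
      _ ≤ B := by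
          rw [intervalIntegral.integral_of_le (by linarith [N.cast_nonneg (α := ℝ)])]
          apply setIntegral_mono_set hgI _ (Set.Ioc_subset_Ioi_self.eventuallyLE)
          filter_upwards [ae_restrict_mem measurableSet_Ioi] with y hy
          have hy0 : (0:ℝ) < y := lt_trans zero_lt_one hy
          unfold gg; positivity
  have hP : Tendsto (fun N : ℕ => ∑ k ∈ Finset.range N, ff a δ ((k:ℝ)+1)) atTop
      (𝓝 (∑' j : ℕ, ff a δ ((j:ℝ)+1))) := hsum.hasSum.tendsto_sum_nat
  have hQ : Tendsto (fun N : ℕ => ∫ x in (1:ℝ)..((N:ℝ)+1), ff a δ x) atTop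
      (𝓝 (∫ x in Ioi (1:ℝ), ff a δ x)) := by
    apply intervalIntegral_tendsto_integral_Ioi 1 hfI
    exact tendsto_atTop_add_const_right _ 1 tendsto_natCast_atTop_atTop
  have hlim : Tendsto (fun N : ℕ =>
      |(∑ k ∈ Finset.range N, ff a δ ((k:ℝ)+1)) - ∫ x in (1:ℝ)..((N:ℝ)+1), ff a δ x|) atTop
      (𝓝 |(∑' j : ℕ, ff a δ ((j:ℝ)+1)) - ∫ x in Ioi (1:ℝ), ff a δ x|) :=
    ((hP.sub hQ).abs)
  exact le_of_tendsto hlim (Eventually.of_forall hNbound)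

lemma integrable_Ioi0 {c δ : ℝ} (hc : -1 < c) (hδ : 0 < δ) :
    IntegrableOn (fun x : ℝ => x ^ c * Real.exp (-δ * x)) (Ioi 0) := by
  have := integrableOn_rpow_mul_exp_neg_mul_rpow (p := 1) (s := c) (b := δ) hc zero_lt_one hδ
  simpa [Real.rpow_one] using this

lemma integral_Ioi0 {c δ : ℝ} (hc : -1 < c) (hδ : 0 < δ) :
    ∫ x in Ioi (0:ℝ), x ^ c * Real.exp (-δ * x) = (1/δ) ^ (c+1) * Real.Gamma (c+1) := by
  have := Real.integral_rpow_mul_exp_neg_mul_Ioi (a := c+1) (r := δ) (by linarith) hδ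
  simp only [add_sub_cancel_right] at this
  rw [← this]
  congr 1 with x
  ring_nf

end Stmt2Aux

/-- The double factorial `(2r-5)!! = ∏_{0 ≤ j < ⌈(2r-5)/2⌉} ((2r-5) - 2j)`, with the
convention that it equals `1` when `2r-5 ≤ 0`.  For `r ≥ 3` we have
`⌈(2r-5)/2⌉ = r - 2`, and for `r = 2` the product is empty. -/
noncomputable def doubleFac (r : ℕ) : ℝ :=
  ∏ j ∈ Finset.range (r - 2), ((2 * r : ℝ) - 5 - 2 * j)

lemma gamma_df (r : ℕ) (hr : 2 ≤ r) :
    Real.Gamma ((r:ℝ) - 3/2) = doubleFac r * Real.sqrt Real.pi / 2 ^ (r - 2) := by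
  induction r with
  | zero => omega
  | succ n ih =>
    rcases Nat.lt_or_ge n 2 with hn | hn
    · interval_cases n
      · omega
      · norm_num [doubleFac]
        exact Real.Gamma_one_half_eq
    · have ihe := ih hn
      have hrec : Real.Gamma ((n:ℝ) + 1 - 3/2) = ((n:ℝ) - 3/2) * Real.Gamma ((n:ℝ) - 3/2) := by
        have h2n : (2:ℝ) ≤ (n:ℝ) := by exact_mod_cast hn
        rw [show (n:ℝ) + 1 - 3/2 = ((n:ℝ) - 3/2) + 1 by ring,
          Real.Gamma_add_one (by intro h; rw [sub_eq_zero] at h; rw [h] at h2n; norm_num at h2n)]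
      have hdf : doubleFac (n+1) = (2*(n:ℝ) - 3) * doubleFac n := by
        unfold doubleFac
        have h1 : n + 1 - 2 = (n - 2) + 1 := by omega
        rw [h1, Finset.prod_range_succ']
        have h2 : ((2 * (n+1) : ℕ) : ℝ) - 5 - 2 * (0:ℕ) = 2*(n:ℝ) - 3 := by push_cast; ring
        rw [mul_comm]
        congr 1
        · push_cast; ring
        · apply Finset.prod_congr rfl
          intro j _
          push_cast; ring
      have hpow : (2:ℝ) ^ (n - 1) = 2 ^ (n - 2) * 2 := by
        rw [show n - 1 = (n - 2) + 1 by omega, pow_succ]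
      push_cast
      push_cast at hrec ihe
      rw [hrec, ihe, hdf, hpow]
      have h2 : (2:ℝ) ^ (n-2) ≠ 0 := by positivity
      field_simp

set_option maxHeartbeats 1000000 in
open Stmt2Aux in
theorem stmt_2 (r : ℕ) (hr : 2 ≤ r) :
    ∃ C : ℝ, 0 < C ∧ ∀ δ : ℝ, 0 < δ →
      |(∑' j : ℕ, if 1 ≤ j then (j : ℝ) ^ ((r : ℝ) - 5 / 2) * Real.exp (-δ * j) else 0)
          - doubleFac r * Real.sqrt (2 * Real.pi) / (2 * δ) ^ ((r : ℝ) - 3 / 2)|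
        ≤ C * (1 + δ ^ (-((r : ℝ) - 5 / 2))) := by
  set a : ℝ := (r:ℝ) - 5/2 with ha
  clear_value a
  have hr2 : (2:ℝ) ≤ (r:ℝ) := by exact_mod_cast hr
  have ha1 : (0:ℝ) < a + 1 := by simp only [ha]; linarith
  have haneg : -1 < a := by linarith
  have hane : a ≠ 0 := by
    intro h
    have : (r:ℝ) = 5/2 := by simp only [ha] at h; linarith
    have : (2*r : ℕ) = 5 := by
      have : (2*(r:ℝ)) = 5 := by linarith
      exact_mod_cast this
    omega
  have hGpos : 0 < Real.Gamma (a+1) := Real.Gamma_pos_of_pos ha1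
  refine ⟨3 + 2 * Real.Gamma (a+1), by positivity, ?_⟩
  intro δ hδ
  -- case facts about a
  have hacase : a = -1/2 ∨ (1/2 : ℝ) ≤ a := by
    rcases Nat.lt_or_ge r 3 with h3 | h3
    · left
      have : r = 2 := by omega
      simp [ha, this]
      norm_num
    · right
      have : (3:ℝ) ≤ (r:ℝ) := by exact_mod_cast h3
      simp only [ha]; linarith
  -- identify tsum with shifted ff-sum
  have hts : (∑' j : ℕ, if 1 ≤ j then (j : ℝ) ^ a * Real.exp (-δ * j) else 0)
      = ∑' j : ℕ, ff a δ ((j:ℝ)+1) := by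
    have hfun : ∀ j : ℕ, (if 1 ≤ j then (j : ℝ) ^ a * Real.exp (-δ * j) else 0)
        = ff a δ (j:ℝ) := by
      intro j
      rcases Nat.eq_zero_or_pos j with h0 | h1
      · subst h0
        simp [ff, Real.zero_rpow hane]
      · rw [if_pos (by omega : 1 ≤ j)]
        rfl
    simp_rw [hfun]
    have hsum2 : Summable (fun j : ℕ => ff a δ ((j:ℝ)+1)) := summ hδ
    have hsum1 : Summable (fun j : ℕ => ff a δ (j:ℝ)) := by
      apply (summable_nat_add_iff 1).mp
      convert hsum2 using 2 with j
      · rfl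
      rw [Nat.cast_succ]
    rw [Summable.tsum_eq_zero_add hsum1]
    have h0 : ff a δ ((0:ℕ):ℝ) = 0 := by simp [ff, Real.zero_rpow hane]
    rw [h0, zero_add]
    apply tsum_congr; intro j; push_cast; ring_nf
  -- integrability facts
  have hff0 : IntegrableOn (ff a δ) (Ioi 0) := integrable_Ioi0 haneg hδ
  have hff1 : IntegrableOn (ff a δ) (Ioi 1) :=
    hff0.mono_set (fun x hx => mem_Ioi.mpr (lt_trans zero_lt_one hx))
  have hh2 : IntegrableOn (fun x : ℝ => x ^ a * Real.exp (-δ * x)) (Ioi 1) := hff1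
  have hh1 : IntegrableOn (fun x : ℝ => x ^ (a-1) * Real.exp (-δ * x)) (Ioi 1) := by
    rcases hacase with hc | hc
    · -- a - 1 = -3/2 : dominate by x^(-3/2)
      have hint : IntegrableOn (fun x : ℝ => x ^ (a-1)) (Ioi 1) := by
        apply integrableOn_Ioi_rpow_of_lt _ zero_lt_one
        rw [hc]; norm_num
      apply hint.mono'
      · apply ContinuousOn.aestronglyMeasurable _ measurableSet_Ioi
        apply ContinuousOn.mul _ ((Real.continuous_exp.comp (continuous_const.mul continuous_id)).continuousOn)
        intro x hx
        exact (Real.continuousAt_rpow_const x _ (Or.inl (ne_of_gt (lt_trans zero_lt_one hx)))).continuousWithinAt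
      · filter_upwards [ae_restrict_mem measurableSet_Ioi] with x hx
        have hx0 : (0:ℝ) < x := lt_trans zero_lt_one hx
        rw [Real.norm_eq_abs, abs_mul, abs_of_pos (Real.rpow_pos_of_pos hx0 _),
          abs_of_pos (Real.exp_pos _)]
        nth_rewrite 2 [← mul_one (x ^ (a-1))]
        apply mul_le_mul_of_nonneg_left _ (Real.rpow_pos_of_pos hx0 _).le
        rw [Real.exp_le_one_iff]
        nlinarith
    · exact (integrable_Ioi0 (by linarith) hδ).mono_set (fun x hx => mem_Ioi.mpr (lt_trans zero_lt_one hx))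
  have hgg1 : IntegrableOn (gg a δ) (Ioi 1) := by
    have : gg a δ = fun x => |a| * (x ^ (a-1) * Real.exp (-δ * x)) + δ * (x ^ a * Real.exp (-δ * x)) := by
      funext x; unfold gg; ring
    rw [this]
    exact (hh1.const_mul _).add (hh2.const_mul _)
  -- the Gamma integral and its split
  have hI : ∫ x in Ioi (0:ℝ), ff a δ x = (1/δ) ^ (a+1) * Real.Gamma (a+1) :=
    integral_Ioi0 haneg hδ
  have hdisj : Disjoint (Ioc (0:ℝ) 1) (Ioi (1:ℝ)) := Ioc_disjoint_Ioi le_rfl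
  have hIoc : IntegrableOn (ff a δ) (Ioc (0:ℝ) 1) := hff0.mono_set Ioc_subset_Ioi_self
  have hsplit : ∫ x in Ioi (0:ℝ), ff a δ x
      = (∫ x in Ioc (0:ℝ) 1, ff a δ x) + ∫ x in Ioi (1:ℝ), ff a δ x := by
    rw [← setIntegral_union hdisj measurableSet_Ioi hIoc hff1, Ioc_union_Ioi_eq_Ioi zero_le_one]
  -- bound on the small piece
  have ha12 : (1/2:ℝ) ≤ a + 1 := by rcases hacase with hc | hc <;> linarith
  have hxa_int : IntegrableOn (fun x : ℝ => x ^ a) (Ioc (0:ℝ) 1) := by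
    have := (intervalIntegral.intervalIntegrable_rpow' (a := 0) (b := 1) (r := a) haneg)
    rw [intervalIntegrable_iff_integrableOn_Ioc_of_le zero_le_one] at this
    exact this
  have hsmall_nonneg : 0 ≤ ∫ x in Ioc (0:ℝ) 1, ff a δ x := by
    apply setIntegral_nonneg measurableSet_Ioc
    intro x hx
    have hx0 : 0 < x := hx.1
    unfold ff; positivity
  have hsmall : (∫ x in Ioc (0:ℝ) 1, ff a δ x) ≤ 2 := by
    have h1 : (∫ x in Ioc (0:ℝ) 1, ff a δ x) ≤ ∫ x in Ioc (0:ℝ) 1, x ^ a := by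
      apply setIntegral_mono_on hIoc hxa_int measurableSet_Ioc
      intro x hx
      have hx0 : 0 < x := hx.1
      unfold ff
      nth_rewrite 2 [← mul_one (x ^ a)]
      apply mul_le_mul_of_nonneg_left _ (Real.rpow_pos_of_pos hx0 _).le
      rw [Real.exp_le_one_iff]
      nlinarith
    have h2 : (∫ x in Ioc (0:ℝ) 1, x ^ a) = 1/(a+1) := by
      rw [← intervalIntegral.integral_of_le zero_le_one,
        integral_rpow (Or.inl haneg)]
      rw [Real.one_rpow, Real.zero_rpow (by linarith : a + 1 ≠ 0)]
      ring
    rw [h2] at h1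
    have : 1/(a+1) ≤ 2 := by
      rw [div_le_iff₀ (by linarith)]
      linarith
    linarith
  -- abbreviations
  set D : ℝ := δ ^ (-a) with hD
  have hDpos : 0 < D := Real.rpow_pos_of_pos hδ _
  have hod : ∀ c : ℝ, (1/δ : ℝ) ^ c = δ ^ (-c) := by
    intro c
    rw [one_div, Real.inv_rpow hδ.le, Real.rpow_neg hδ.le]
  -- bound the gg integral
  have hT2 : (∫ x in Ioi (1:ℝ), x ^ a * Real.exp (-δ * x)) ≤ (1/δ) ^ (a+1) * Real.Gamma (a+1) := by
    rw [← hI]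
    apply setIntegral_mono_set hff0 _ ((Ioi_subset_Ioi zero_le_one).eventuallyLE)
    filter_upwards [ae_restrict_mem measurableSet_Ioi] with x hx
    have hx0 : (0:ℝ) < x := hx
    unfold ff; positivity
  have hggsplit : ∫ x in Ioi (1:ℝ), gg a δ x
      = |a| * (∫ x in Ioi (1:ℝ), x ^ (a-1) * Real.exp (-δ * x))
        + δ * (∫ x in Ioi (1:ℝ), x ^ a * Real.exp (-δ * x)) := by
    have hcong : ∀ x ∈ Ioi (1:ℝ), gg a δ x
        = |a| * (x ^ (a-1) * Real.exp (-δ * x)) + δ * (x ^ a * Real.exp (-δ * x)) := by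
      intro x _; unfold gg; ring
    rw [setIntegral_congr_fun measurableSet_Ioi hcong, integral_add (hh1.const_mul _) (hh2.const_mul _),
      integral_const_mul, integral_const_mul]
  have hδT2 : δ * (∫ x in Ioi (1:ℝ), x ^ a * Real.exp (-δ * x)) ≤ Real.Gamma (a+1) * D := by
    have h := mul_le_mul_of_nonneg_left hT2 hδ.le
    have heq : δ * ((1/δ) ^ (a+1) * Real.Gamma (a+1)) = Real.Gamma (a+1) * D := by
      rw [hod, hD]
      nth_rewrite 1 [← Real.rpow_one δ]
      rw [← mul_assoc, ← Real.rpow_add hδ, show (1:ℝ) + -(a+1) = -a by ring]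
      ring
    rw [heq] at h
    exact h
  have hT1 : |a| * (∫ x in Ioi (1:ℝ), x ^ (a-1) * Real.exp (-δ * x)) ≤ 1 + Real.Gamma (a+1) * D := by
    rcases hacase with hc | hc
    · -- a = -1/2
      have hint : IntegrableOn (fun x : ℝ => x ^ (a-1)) (Ioi 1) := by
        apply integrableOn_Ioi_rpow_of_lt _ zero_lt_one
        rw [hc]; norm_num
      have hmono : (∫ x in Ioi (1:ℝ), x ^ (a-1) * Real.exp (-δ * x)) ≤ ∫ x in Ioi (1:ℝ), x ^ (a-1) := by
        apply setIntegral_mono_on hh1 hint measurableSet_Ioi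
        intro x hx
        have hx0 : (0:ℝ) < x := lt_trans zero_lt_one hx
        nth_rewrite 2 [← mul_one (x ^ (a-1))]
        apply mul_le_mul_of_nonneg_left _ (Real.rpow_pos_of_pos hx0 _).le
        rw [Real.exp_le_one_iff]
        nlinarith
      have hval : (∫ x in Ioi (1:ℝ), x ^ (a-1)) = 2 := by
        rw [integral_Ioi_rpow_of_lt (by rw [hc]; norm_num) zero_lt_one]
        rw [Real.one_rpow, hc]
        norm_num
      have h12 : |a| = 1/2 := by rw [hc]; norm_num
      rw [h12]
      have := hmono.trans_eq hval
      nlinarith [mul_pos hGpos hDpos]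
    · -- 1/2 ≤ a
      have hI1 : ∫ x in Ioi (0:ℝ), x ^ (a-1) * Real.exp (-δ * x) = (1/δ) ^ a * Real.Gamma a := by
        have := integral_Ioi0 (c := a - 1) (δ := δ) (by linarith) hδ
        rw [show a - 1 + 1 = a by ring] at this
        exact this
      have hmono : (∫ x in Ioi (1:ℝ), x ^ (a-1) * Real.exp (-δ * x))
          ≤ ∫ x in Ioi (0:ℝ), x ^ (a-1) * Real.exp (-δ * x) := by
        apply setIntegral_mono_set (integrable_Ioi0 (by linarith) hδ) _
          ((Ioi_subset_Ioi zero_le_one).eventuallyLE)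
        filter_upwards [ae_restrict_mem measurableSet_Ioi] with x hx
        have hx0 : (0:ℝ) < x := hx
        positivity
      have habs : |a| = a := abs_of_pos (by linarith)
      have hgam : a * Real.Gamma a = Real.Gamma (a+1) := (Real.Gamma_add_one (by linarith)).symm
      have hT1pos : 0 ≤ ∫ x in Ioi (1:ℝ), x ^ (a-1) * Real.exp (-δ * x) := by
        apply setIntegral_nonneg measurableSet_Ioi
        intro x hx
        have hx0 : (0:ℝ) < x := lt_trans zero_lt_one hx
        positivity
      rw [habs]
      calc a * (∫ x in Ioi (1:ℝ), x ^ (a-1) * Real.exp (-δ * x))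
          ≤ a * ((1/δ) ^ a * Real.Gamma a) := by
            apply mul_le_mul_of_nonneg_left _ (by linarith : (0:ℝ) ≤ a)
            rw [← hI1]; exact hmono
        _ = Real.Gamma (a+1) * D := by rw [hod, hD, ← hgam]; ring
        _ ≤ 1 + Real.Gamma (a+1) * D := by linarith
  -- total bound for |S' - I|
  have hmain : |(∑' j : ℕ, ff a δ ((j:ℝ)+1)) - (1/δ) ^ (a+1) * Real.Gamma (a+1)|
      ≤ 3 + 2 * Real.Gamma (a+1) * D := by
    have h1 := sum_est hδ hff1 hgg1
    have h2 : |(∫ x in Ioi (1:ℝ), ff a δ x) - (1/δ) ^ (a+1) * Real.Gamma (a+1)| ≤ 2 := by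
      rw [← hI, hsplit, show (∫ x in Ioi (1:ℝ), ff a δ x)
          - ((∫ x in Ioc (0:ℝ) 1, ff a δ x) + (∫ x in Ioi (1:ℝ), ff a δ x))
          = -(∫ x in Ioc (0:ℝ) 1, ff a δ x) by ring, abs_neg,
        abs_of_nonneg hsmall_nonneg]
      exact hsmall
    have h3 : (∫ x in Ioi (1:ℝ), gg a δ x) ≤ 1 + 2 * Real.Gamma (a+1) * D := by
      rw [hggsplit]
      nlinarith [hT1, hδT2]
    calc |(∑' j : ℕ, ff a δ ((j:ℝ)+1)) - (1/δ) ^ (a+1) * Real.Gamma (a+1)|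
        ≤ |(∑' j : ℕ, ff a δ ((j:ℝ)+1)) - ∫ x in Ioi (1:ℝ), ff a δ x|
          + |(∫ x in Ioi (1:ℝ), ff a δ x) - (1/δ) ^ (a+1) * Real.Gamma (a+1)| := abs_sub_le _ _ _
      _ ≤ (1 + 2 * Real.Gamma (a+1) * D) + 2 := add_le_add (h1.trans h3) h2
      _ = 3 + 2 * Real.Gamma (a+1) * D := by ring
  -- identify the target constant with the Gamma expression
  have htarget : doubleFac r * Real.sqrt (2 * Real.pi) / (2 * δ) ^ ((r:ℝ) - 3/2)
      = (1/δ) ^ (a+1) * Real.Gamma (a+1) := by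
    have hb : a + 1 = (r:ℝ) - 3/2 := by rw [ha]; ring
    have hcast : ((r - 2 : ℕ) : ℝ) = (r:ℝ) - 2 := by push_cast [hr]; ring
    have hgamma : Real.Gamma (a+1) = doubleFac r * Real.sqrt Real.pi / 2 ^ (r - 2) := by
      rw [hb]; exact gamma_df r hr
    have h2b : (2:ℝ) ^ ((r:ℝ) - 3/2) = 2 ^ (r-2 : ℕ) * Real.sqrt 2 := by
      rw [show (r:ℝ) - 3/2 = ((r-2:ℕ):ℝ) + 1/2 by rw [hcast]; ring,
        Real.rpow_add (by norm_num), Real.rpow_natCast]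
      congr 1
      rw [Real.sqrt_eq_rpow]
    rw [hod, hgamma, hb, Real.rpow_neg hδ.le ((r:ℝ)-3/2),
      Real.mul_rpow (by norm_num) hδ.le, h2b, Real.sqrt_mul (by norm_num)]
    have hs2 : (0:ℝ) < Real.sqrt 2 := by positivity
    have hp2 : (0:ℝ) < (2:ℝ) ^ (r-2:ℕ) := by positivity
    have hdb : (0:ℝ) < δ ^ ((r:ℝ) - 3/2) := Real.rpow_pos_of_pos hδ _
    field_simp
  rw [hts, htarget]
  have : (1:ℝ) + D ≤ 1 + D := le_rfl
  calc |(∑' j : ℕ, ff a δ ((j:ℝ)+1)) - (1/δ) ^ (a+1) * Real.Gamma (a+1)|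
      ≤ 3 + 2 * Real.Gamma (a+1) * D := hmain
    _ ≤ (3 + 2 * Real.Gamma (a+1)) * (1 + D) := by nlinarith [hGpos, hDpos]
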